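/- arXiv:2212.06358 — 2 statements merged into one kernel-verified Lean document; each statement's English description precedes it below -/
import Mathlib

section
/- Let x ∈ ℂⁿ satisfy x − x_* ∈ range(Aᴴ) and b − Ax ≠ 0. Then max_{i∈{1,…,m}} ψ_i(x) ≥ (σ_r(A)² / ‖A_{Û(x),:}‖_F²) · ‖x − x_*‖₂². -/
open Matrix Finset

noncomputable section

/-- Squared Euclidean norm `‖v‖₂²` of a complex vector. -/
def vecNormSq {k : ℕ} (v : Fin k → ℂ) : ℝ := ∑ i, ‖v i‖ ^ 2

variable {m n : ℕ}

/-- Squared Euclidean norm `‖A_{i,:}‖₂²` of the `i`-th row of `A`. -/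
def rowNormSq (A : Matrix (Fin m) (Fin n) ℂ) (i : Fin m) : ℝ := ∑ j, ‖A i j‖ ^ 2

/-- Squared Frobenius norm `‖A‖_F²`. -/
def frobSq (A : Matrix (Fin m) (Fin n) ℂ) : ℝ := ∑ i, ∑ j, ‖A i j‖ ^ 2

/-- `ψ_i(x) = |b_i − A_{i,:} x|² / ‖A_{i,:}‖₂²`. -/
def psi (A : Matrix (Fin m) (Fin n) ℂ) (b : Fin m → ℂ) (x : Fin n → ℂ) (i : Fin m) : ℝ :=
  ‖b i - A.mulVec x i‖ ^ 2 / rowNormSq A i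

/-- `max_{i ∈ [m]} ψ_i(x)`. -/
def psiMax (A : Matrix (Fin m) (Fin n) ℂ) (b : Fin m → ℂ) (x : Fin n → ℂ) : ℝ :=
  ⨆ i, psi A b x i

/-- The row submatrix `A_{S,:}` of `A`, realized by replacing the rows outside `S` with zero
(which changes neither the Frobenius norm nor the largest singular value). -/
def rowSub (A : Matrix (Fin m) (Fin n) ℂ) (S : Finset (Fin m)) : Matrix (Fin m) (Fin n) ℂ :=
  fun i j => if i ∈ S then A i j else 0

/-- `σ_r(A)²` : the smallest nonzero eigenvalue of `AᴴA`. -/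
def sigmaRSq (A : Matrix (Fin m) (Fin n) ℂ) : ℝ :=
  sInf {μ : ℝ | μ ≠ 0 ∧ ∃ i, (Matrix.isHermitian_conjTranspose_mul_self A).eigenvalues i = μ}

/-- `σ₁(M)²` : the largest eigenvalue of `MᴴM`, i.e. the largest singular value squared. -/
def sigma1Sq {k : Type*} [Fintype k] (M : Matrix k (Fin n) ℂ) : ℝ :=
  ⨆ i, (Matrix.isHermitian_conjTranspose_mul_self M).eigenvalues i

/-- `Û(x) = {i ∈ [m] : ψ_i(x) ≠ 0}`. -/
def Uhat (A : Matrix (Fin m) (Fin n) ℂ) (b : Fin m → ℂ) (x : Fin n → ℂ) : Finset (Fin m) :=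
  Finset.univ.filter fun i => psi A b x i ≠ 0

/-- The greedy index set `U(x)` with relaxation parameter `θ = 1/2`. -/
def Ugreedy (A : Matrix (Fin m) (Fin n) ℂ) (b : Fin m → ℂ) (x : Fin n → ℂ) : Finset (Fin m) :=
  Finset.univ.filter fun i =>
    (1 / 2) * psiMax A b x + (1 / 2) * (vecNormSq (b - A.mulVec x) / frobSq A) ≤ psi A b x i

/-- `η(x) = Σ_{i ∈ U(x)} (b_i − A_{i,:}x) e_i`. -/
def eta (A : Matrix (Fin m) (Fin n) ℂ) (b : Fin m → ℂ) (x : Fin n → ℂ) : Fin m → ℂ :=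
  fun i => if i ∈ Ugreedy A b x then b i - A.mulVec x i else 0

/-- `uᴴ v`, the conjugate dot product. -/
def dotc {k : ℕ} (u v : Fin k → ℂ) : ℂ := ∑ i, (starRingEnd ℂ) (u i) * v i

/-- `φ(x, η) = |ηᴴ(b − A x)|² / ‖Aᴴ η‖₂²`. -/
def phi (A : Matrix (Fin m) (Fin n) ℂ) (b : Fin m → ℂ) (x : Fin n → ℂ) (η : Fin m → ℂ) : ℝ :=
  ‖dotc η (b - A.mulVec x)‖ ^ 2 / vecNormSq (Aᴴ.mulVec η)

end


noncomputable section

lemma term_re (z : ℂ) : ((starRingEnd ℂ) z * z).re = ‖z‖ ^ 2 := by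
  rw [mul_comm, Complex.mul_conj]
  simp [← Complex.sq_norm, ← Complex.ofReal_pow]

lemma vecNormSq_eq {k : ℕ} (v : Fin k → ℂ) : vecNormSq v = (star v ⬝ᵥ v).re := by
  simp only [vecNormSq, dotProduct, Pi.star_apply, Complex.re_sum, ← term_re]
  rfl

lemma conj_mul_self (z : ℂ) : (starRingEnd ℂ) z * z = ((‖z‖ ^ 2 : ℝ) : ℂ) := by
  rw [mul_comm, Complex.mul_conj]
  simp [Complex.normSq_eq_norm_sq]

lemma vecNormSq_eq_zero {k : ℕ} {w : Fin k → ℂ} (h : vecNormSq w = 0) : w = 0 := by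
  funext i
  have h2 := (Finset.sum_eq_zero_iff_of_nonneg (fun i _ => sq_nonneg ‖w i‖)).mp h i
    (Finset.mem_univ i)
  simpa using h2

lemma spectral_bound {m n : ℕ} (A : Matrix (Fin m) (Fin n) ℂ) (v : Fin n → ℂ)
    (hvr : ∃ y, v = Aᴴ.mulVec y) :
    sigmaRSq A * vecNormSq v ≤ vecNormSq (A.mulVec v) := by
  classical
  obtain ⟨y, hy⟩ := hvr
  have hB := Matrix.isHermitian_conjTranspose_mul_self A
  set M : Matrix (Fin n) (Fin n) ℂ := (hB.eigenvectorUnitary : Matrix (Fin n) (Fin n) ℂ) with hM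
  set lam := hB.eigenvalues with hlam
  have hMU : M * star M = 1 := Matrix.mem_unitaryGroup_iff.mp hB.eigenvectorUnitary.2
  set c : Fin n → ℂ := star M *ᵥ v with hc
  clear_value c
  have hstarc : star c = star v ᵥ* M := by
    rw [hc, Matrix.star_mulVec, Matrix.star_eq_conjTranspose, Matrix.conjTranspose_conjTranspose]
  have hczero : ∀ j, lam j = 0 → c j = 0 := by
    intro j hj
    have hu : (Aᴴ * A) *ᵥ ⇑(hB.eigenvectorBasis j) = 0 := by
      rw [hB.mulVec_eigenvectorBasis j]
      rw [show hB.eigenvalues j = lam j from rfl, hj]; simp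
    have hAu : A *ᵥ ⇑(hB.eigenvectorBasis j) = 0 := by
      have h2 : star (A *ᵥ ⇑(hB.eigenvectorBasis j)) ⬝ᵥ (A *ᵥ ⇑(hB.eigenvectorBasis j)) = 0 := by
        rw [Matrix.star_mulVec, ← Matrix.dotProduct_mulVec, Matrix.mulVec_mulVec, hu,
          dotProduct_zero]
      refine vecNormSq_eq_zero ?_
      rw [vecNormSq_eq, h2, Complex.zero_re]
    have hcj : c j = star ⇑(hB.eigenvectorBasis j) ⬝ᵥ v := by
      rw [hc]
      simp [Matrix.mulVec, dotProduct, Matrix.star_apply, hM,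
        Matrix.IsHermitian.eigenvectorUnitary_apply]
    rw [hcj, hy, Matrix.dotProduct_mulVec, ← Matrix.star_mulVec, hAu]
    simp
  have hnorm : star v ⬝ᵥ v = star c ⬝ᵥ c := by
    rw [hstarc, hc, Matrix.dotProduct_mulVec, Matrix.vecMul_vecMul, hMU, Matrix.vecMul_one]
  have hBv : (Aᴴ * A) *ᵥ v =
      M *ᵥ (Matrix.diagonal (RCLike.ofReal ∘ lam) *ᵥ c) := by
    have h4 : M *ᵥ (Matrix.diagonal (RCLike.ofReal ∘ lam) *ᵥ (star M *ᵥ v)) =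
        (M * Matrix.diagonal (RCLike.ofReal ∘ lam) * star M) *ᵥ v := by
      rw [Matrix.mulVec_mulVec, Matrix.mulVec_mulVec]
    rw [hc, h4, hB.spectral_theorem, Unitary.conjStarAlgAut_apply]
  have hquad : star v ⬝ᵥ ((Aᴴ * A) *ᵥ v) =
      ∑ j, ((lam j : ℝ) : ℂ) * ((starRingEnd ℂ) (c j) * c j) := by
    rw [hBv, Matrix.dotProduct_mulVec, ← hstarc]
    simp only [dotProduct, Pi.star_apply, Matrix.mulVec_diagonal, Function.comp_apply,
      RCLike.star_def]
    exact Finset.sum_congr rfl fun j _ => by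
      rw [show (RCLike.ofReal (lam j) : ℂ) = ((lam j : ℝ) : ℂ) from rfl]; ring
  have hvns : vecNormSq (A.mulVec v) = ∑ j, lam j * ‖c j‖ ^ 2 := by
    rw [vecNormSq_eq, Matrix.star_mulVec, ← Matrix.dotProduct_mulVec, Matrix.mulVec_mulVec, hquad,
      Complex.re_sum]
    refine Finset.sum_congr rfl fun j _ => ?_
    rw [conj_mul_self, ← Complex.ofReal_mul, Complex.ofReal_re]
  have hvnsv : vecNormSq v = ∑ j, ‖c j‖ ^ 2 := by
    rw [vecNormSq_eq, hnorm, ← vecNormSq_eq]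
    simp [vecNormSq]
  rw [hvns, hvnsv, Finset.mul_sum]
  apply Finset.sum_le_sum
  intro j _
  by_cases hj : lam j = 0
  · rw [hczero j hj, hj]; simp
  · refine mul_le_mul_of_nonneg_right ?_ (sq_nonneg _)
    refine csInf_le ⟨0, fun μ hμ => ?_⟩ ⟨hj, j, rfl⟩
    obtain ⟨-, i, rfl⟩ := hμ
    exact Matrix.eigenvalues_conjTranspose_mul_self_nonneg A i

end

/-- if `x − x_* ∈ range(Aᴴ)` and `b − Ax ≠ 0`, then
`max_i ψ_i(x) ≥ (σ_r(A)² / ‖A_{Û(x),:}‖_F²) · ‖x − x_*‖₂²`. -/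
theorem stmt17 {m n : ℕ} (A : Matrix (Fin m) (Fin n) ℂ) (b : Fin m → ℂ)
    (hA : ∀ i, A i ≠ 0)
    (xs : Fin n → ℂ) (hxs1 : A.mulVec xs = b) (hxs2 : ∃ y, xs = Aᴴ.mulVec y)
    (x : Fin n → ℂ) (hx : ∃ y, x - xs = Aᴴ.mulVec y)
    (hres : b - A.mulVec x ≠ 0) :
    (sigmaRSq A / frobSq (rowSub A (Uhat A b x))) * vecNormSq (x - xs) ≤ psiMax A b x := by
  classical
  have hrow_pos : ∀ i, 0 < rowNormSq A i := by
    intro i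
    obtain ⟨j, hj⟩ := Function.ne_iff.mp (hA i)
    exact Finset.sum_pos' (fun j _ => sq_nonneg _)
      ⟨j, Finset.mem_univ j, pow_pos (norm_pos_iff.mpr hj) 2⟩
  have hpsi_le : ∀ i, psi A b x i ≤ psiMax A b x := fun i =>
    le_ciSup (Set.Finite.bddAbove (Set.finite_range _)) i
  have hterm : ∀ i, ‖(b - A.mulVec x) i‖ ^ 2 = rowNormSq A i * psi A b x i := by
    intro i
    rw [psi, mul_div_cancel₀ _ (ne_of_gt (hrow_pos i))]
    simp
  have hsum : vecNormSq (b - A.mulVec x) = ∑ i ∈ Uhat A b x, rowNormSq A i * psi A b x i := by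
    rw [vecNormSq]
    rw [Finset.sum_congr rfl fun i _ => hterm i]
    refine (Finset.sum_subset (Finset.subset_univ _) fun i _ hi => ?_).symm
    have : psi A b x i = 0 := by
      by_contra hne
      exact hi (Finset.mem_filter.mpr ⟨Finset.mem_univ i, hne⟩)
    rw [this, mul_zero]
  have hfrob : frobSq (rowSub A (Uhat A b x)) = ∑ i ∈ Uhat A b x, rowNormSq A i := by
    rw [frobSq]
    have : ∀ i, ∑ j, ‖rowSub A (Uhat A b x) i j‖ ^ 2 =
        if i ∈ Uhat A b x then rowNormSq A i else 0 := by
      intro i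
      by_cases hi : i ∈ Uhat A b x <;> simp [rowSub, rowNormSq, hi]
    rw [Finset.sum_congr rfl fun i _ => this i, Finset.sum_ite_mem, Finset.univ_inter]
  have hF_pos : 0 < frobSq (rowSub A (Uhat A b x)) := by
    obtain ⟨i, hi⟩ := Function.ne_iff.mp hres
    have hpsi_ne : psi A b x i ≠ 0 := by
      rw [psi]
      have h1 : (0:ℝ) < ‖b i - A.mulVec x i‖ ^ 2 := by
        have : b i - A.mulVec x i ≠ 0 := by simpa [Pi.sub_apply] using hi
        exact pow_pos (norm_pos_iff.mpr this) 2
      exact ne_of_gt (div_pos h1 (hrow_pos i))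
    have hmem : i ∈ Uhat A b x := Finset.mem_filter.mpr ⟨Finset.mem_univ i, hpsi_ne⟩
    rw [hfrob]
    exact Finset.sum_pos (fun j _ => hrow_pos j) ⟨i, hmem⟩
  have hb1 : vecNormSq (b - A.mulVec x) ≤ frobSq (rowSub A (Uhat A b x)) * psiMax A b x := by
    rw [hsum, hfrob, Finset.sum_mul]
    refine Finset.sum_le_sum fun i _ => ?_
    exact mul_le_mul_of_nonneg_left (hpsi_le i) (le_of_lt (hrow_pos i))
  have hb2 : sigmaRSq A * vecNormSq (x - xs) ≤ vecNormSq (b - A.mulVec x) := by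
    have hneg : A.mulVec (x - xs) = -(b - A.mulVec x) := by
      rw [Matrix.mulVec_sub, hxs1]
      funext i; simp [Pi.sub_apply]
    have h3 := spectral_bound A (x - xs) hx
    rw [hneg] at h3
    simpa [vecNormSq, norm_neg, norm_sub_rev] using h3
  rw [div_mul_eq_mul_div, div_le_iff₀ hF_pos]
  calc sigmaRSq A * vecNormSq (x - xs) ≤ vecNormSq (b - A.mulVec x) := hb2
    _ ≤ frobSq (rowSub A (Uhat A b x)) * psiMax A b x := hb1
    _ = psiMax A b x * frobSq (rowSub A (Uhat A b x)) := mul_comm _ _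
end

section
/- Let x ∈ ℂⁿ satisfy x − x_* ∈ range(Aᴴ) and b − Ax ≠ 0. Then φ(x, η(x)) ≥ ρ̂(x)·‖x − x_*‖₂², where ρ̂(x) = ((1/2)·‖A‖_F²/‖A_{Û(x),:}‖_F² + 1/2)·(‖A_{U(x),:}‖_F²/‖A‖_F²)·(σ_r(A)²/σ₁(A_{U(x),:})²). -/
open Matrix Finset

/- ### Auxiliary lemmas -/

section Aux

open Matrix Finset

lemma dotc_eq {k : ℕ} (u v : Fin k → ℂ) : dotc u v = dotProduct (star u) v := rfl

lemma re_dotc_self {k : ℕ} (v : Fin k → ℂ) : (dotc v v).re = vecNormSq v := by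
  rw [dotc, Complex.re_sum, vecNormSq]
  congr 1; funext i
  rw [mul_comm, Complex.mul_conj]
  simp [Complex.normSq_eq_norm_sq, ← Complex.ofReal_pow]

lemma dotc_mulVec {k l : ℕ} (M : Matrix (Fin k) (Fin l) ℂ) (u : Fin k → ℂ) (w : Fin l → ℂ) :
    dotc u (M *ᵥ w) = dotc (Mᴴ *ᵥ u) w := by
  rw [dotc_eq, dotc_eq, dotProduct_mulVec, Matrix.star_mulVec,
    Matrix.conjTranspose_conjTranspose]

lemma dotc_self_mulVec {k l : ℕ} (M : Matrix (Fin k) (Fin l) ℂ) (w : Fin l → ℂ) :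
    dotc w ((Mᴴ * M) *ᵥ w) = dotc (M *ᵥ w) (M *ᵥ w) := by
  rw [← Matrix.mulVec_mulVec, dotc_mulVec, Matrix.conjTranspose_conjTranspose]

lemma vecNormSq_nonneg {k : ℕ} (v : Fin k → ℂ) : 0 ≤ vecNormSq v :=
  Finset.sum_nonneg fun i _ => by positivity

lemma vecNormSq_eq_zero_iff {k : ℕ} (v : Fin k → ℂ) : vecNormSq v = 0 ↔ v = 0 := by
  constructor
  · intro h
    funext i
    have := (Finset.sum_eq_zero_iff_of_nonneg (fun i _ => by positivity)).mp h i (mem_univ i)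
    simpa using this
  · intro h; subst h; simp [vecNormSq]

lemma conj_real_smul_re (t : ℝ) (z : ℂ) :
    ((starRingEnd ℂ) z * ((t : ℂ) * z)).re = t * ‖z‖ ^ 2 := by
  have h : (starRingEnd ℂ) z * ((t : ℂ) * z) = (t : ℂ) * (z * (starRingEnd ℂ) z) := by ring
  rw [h, Complex.mul_conj]
  simp [Complex.normSq_eq_norm_sq, ← Complex.ofReal_pow, ← Complex.ofReal_mul]

lemma dotc_re_sq_le {k : ℕ} (a b : Fin k → ℂ) :
    (dotc a b).re ^ 2 ≤ vecNormSq a * vecNormSq b := by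
  have h1 : |(dotc a b).re| ≤ ∑ i, ‖a i‖ * ‖b i‖ := by
    calc |(dotc a b).re| ≤ ‖dotc a b‖ := Complex.abs_re_le_norm _
      _ ≤ ∑ i, ‖(starRingEnd ℂ) (a i) * b i‖ := norm_sum_le _ _
      _ = ∑ i, ‖a i‖ * ‖b i‖ := by
          refine Finset.sum_congr rfl fun i _ => ?_
          rw [norm_mul, RCLike.norm_conj]
  have h2 : (∑ i, ‖a i‖ * ‖b i‖) ^ 2 ≤ (∑ i, ‖a i‖ ^ 2) * (∑ i, ‖b i‖ ^ 2) :=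
    Finset.sum_mul_sq_le_sq_mul_sq Finset.univ _ _
  calc (dotc a b).re ^ 2 = |(dotc a b).re| ^ 2 := (sq_abs _).symm
    _ ≤ (∑ i, ‖a i‖ * ‖b i‖) ^ 2 := by
        apply pow_le_pow_left₀ (abs_nonneg _) h1
    _ ≤ vecNormSq a * vecNormSq b := h2

lemma spectral_expand {m n : ℕ} (M : Matrix (Fin m) (Fin n) ℂ) (v : Fin n → ℂ) :
    ∃ c : Fin n → ℂ,
      vecNormSq v = ∑ i, ‖c i‖ ^ 2 ∧
      vecNormSq (M *ᵥ v) = ∑ i, (Matrix.isHermitian_conjTranspose_mul_self M).eigenvalues i * ‖c i‖ ^ 2 ∧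
      ∀ i, (Matrix.isHermitian_conjTranspose_mul_self M).eigenvalues i = 0 →
        ∀ y, v = Mᴴ *ᵥ y → c i = 0 := by
  have hH := Matrix.isHermitian_conjTranspose_mul_self M
  set V : Matrix (Fin n) (Fin n) ℂ := (hH.eigenvectorUnitary : Matrix (Fin n) (Fin n) ℂ) with hV
  refine ⟨star V *ᵥ v, ?_, ?_, ?_⟩
  · have hVV' : V * star V = 1 := Unitary.coe_mul_star_self hH.eigenvectorUnitary
    have h0 : dotc (star V *ᵥ v) (star V *ᵥ v) = dotc v v := by
      rw [dotc_mulVec, Matrix.mulVec_mulVec, ← Matrix.star_eq_conjTranspose (star V),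
        star_star, hVV', Matrix.one_mulVec]
    show vecNormSq v = vecNormSq (star V *ᵥ v)
    rw [← re_dotc_self, ← re_dotc_self, h0]
  · have h1 : dotc v ((Mᴴ * M) *ᵥ v) = dotc (M *ᵥ v) (M *ᵥ v) := dotc_self_mulVec M v
    have h2 : (Mᴴ * M) *ᵥ v
        = V *ᵥ (Matrix.diagonal (RCLike.ofReal ∘ hH.eigenvalues) *ᵥ (star V *ᵥ v)) := by
      rw [Matrix.mulVec_mulVec, Matrix.mulVec_mulVec]
      exact congrArg (fun X => X *ᵥ v) hH.spectral_theorem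
    have h3 : dotc v (V *ᵥ (Matrix.diagonal (RCLike.ofReal ∘ hH.eigenvalues) *ᵥ (star V *ᵥ v)))
        = dotc (star V *ᵥ v)
            (Matrix.diagonal (RCLike.ofReal ∘ hH.eigenvalues) *ᵥ (star V *ᵥ v)) := by
      rw [dotc_mulVec]; rfl
    rw [← re_dotc_self, ← h1, h2, h3, dotc, Complex.re_sum]
    congr 1; funext i
    rw [Matrix.mulVec_diagonal]
    exact conj_real_smul_re _ _
  · intro i hi y hy
    have hMu : M *ᵥ ⇑(hH.eigenvectorBasis i) = 0 := by
      rw [← vecNormSq_eq_zero_iff, ← re_dotc_self, ← dotc_self_mulVec,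
        hH.mulVec_eigenvectorBasis i]
      have h4 : dotc (⇑(hH.eigenvectorBasis i)) (hH.eigenvalues i • ⇑(hH.eigenvectorBasis i))
          = ((hH.eigenvalues i : ℝ) : ℂ)
              * dotc (⇑(hH.eigenvectorBasis i)) (⇑(hH.eigenvectorBasis i)) := by
        simp [dotc, Complex.real_smul, Finset.mul_sum, mul_left_comm]
      rw [h4, hi]
      simp
    have hci : (star V *ᵥ v) i = dotc (⇑(hH.eigenvectorBasis i)) v := by
      unfold dotc
      simp only [Matrix.mulVec, dotProduct, Matrix.star_apply]
      refine Finset.sum_congr rfl fun j _ => ?_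
      rw [hV, hH.eigenvectorUnitary_apply]
      rfl
    rw [hci, hy, dotc_mulVec, Matrix.conjTranspose_conjTranspose, hMu]
    simp [dotc]

lemma sigma1_bound {m n : ℕ} (M : Matrix (Fin m) (Fin n) ℂ) (v : Fin n → ℂ) :
    vecNormSq (M *ᵥ v) ≤ sigma1Sq M * vecNormSq v := by
  obtain ⟨c, h1, h2, -⟩ := spectral_expand M v
  rw [h1, h2, sigma1Sq, Finset.mul_sum]
  refine Finset.sum_le_sum fun i _ => ?_
  refine mul_le_mul_of_nonneg_right ?_ (by positivity)
  exact le_ciSup (Set.Finite.bddAbove (Set.finite_range _)) i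

lemma sigmaR_bound {m n : ℕ} (A : Matrix (Fin m) (Fin n) ℂ) (z : Fin n → ℂ)
    (hz : ∃ y, z = Aᴴ *ᵥ y) :
    sigmaRSq A * vecNormSq z ≤ vecNormSq (A *ᵥ z) := by
  obtain ⟨c, h1, h2, h3⟩ := spectral_expand A z
  rw [h1, h2, Finset.mul_sum]
  refine Finset.sum_le_sum fun i _ => ?_
  by_cases hlam : (Matrix.isHermitian_conjTranspose_mul_self A).eigenvalues i = 0
  · obtain ⟨y, hy⟩ := hz
    rw [h3 i hlam y hy]
    simp
  · refine mul_le_mul_of_nonneg_right ?_ (by positivity)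
    refine csInf_le ?_ ⟨hlam, i, rfl⟩
    refine Set.Finite.bddBelow (Set.Finite.subset
      (Set.finite_range (Matrix.isHermitian_conjTranspose_mul_self A).eigenvalues) ?_)
    rintro μ ⟨-, j, hj⟩
    exact ⟨j, hj⟩

lemma sigmaR_nonneg {m n : ℕ} (A : Matrix (Fin m) (Fin n) ℂ) : 0 ≤ sigmaRSq A := by
  refine Real.sInf_nonneg ?_
  rintro μ ⟨-, i, rfl⟩
  exact Matrix.eigenvalues_conjTranspose_mul_self_nonneg A i

lemma frobSq_rowSub {m n : ℕ} (A : Matrix (Fin m) (Fin n) ℂ) (S : Finset (Fin m)) :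
    frobSq (rowSub A S) = ∑ i ∈ S, rowNormSq A i := by
  have h : ∀ i, ∑ j, ‖rowSub A S i j‖ ^ 2 = if i ∈ S then rowNormSq A i else 0 := by
    intro i; by_cases h : i ∈ S <;> simp [rowSub, h, rowNormSq]
  rw [frobSq]
  simp_rw [h]
  rw [Finset.sum_ite_mem, Finset.univ_inter]

end Aux

/-- if `x − x_* ∈ range(Aᴴ)` and `b − Ax ≠ 0`, then
`φ(x, η(x)) ≥ ρ̂(x)·‖x − x_*‖₂²`, where
`ρ̂(x) = ((1/2)‖A‖_F²/‖A_{Û(x),:}‖_F² + 1/2)·(‖A_{U(x),:}‖_F²/‖A‖_F²)·(σ_r(A)²/σ₁(A_{U(x),:})²)`. -/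
theorem stmt18 {m n : ℕ} (A : Matrix (Fin m) (Fin n) ℂ) (b : Fin m → ℂ)
    (hA : ∀ i, A i ≠ 0)
    (xs : Fin n → ℂ) (hxs1 : A.mulVec xs = b) (hxs2 : ∃ y, xs = Aᴴ.mulVec y)
    (x : Fin n → ℂ) (hx : ∃ y, x - xs = Aᴴ.mulVec y)
    (hres : b - A.mulVec x ≠ 0) :
    (((1 / 2) * (frobSq A / frobSq (rowSub A (Uhat A b x))) + 1 / 2) *
        (frobSq (rowSub A (Ugreedy A b x)) / frobSq A) *
        (sigmaRSq A / sigma1Sq (rowSub A (Ugreedy A b x)))) * vecNormSq (x - xs) ≤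
      phi A b x (eta A b x) := by
  classical
  obtain ⟨i₀, hi₀⟩ : ∃ i, (b - A.mulVec x) i ≠ 0 := Function.ne_iff.mp hres
  haveI : Nonempty (Fin m) := ⟨i₀⟩
  -- positivity of row norms and Frobenius norm
  have hrow : ∀ i, 0 < rowNormSq A i := by
    intro i
    obtain ⟨j, hj⟩ := Function.ne_iff.mp (hA i)
    exact Finset.sum_pos' (fun _ _ => by positivity)
      ⟨j, mem_univ j, pow_pos (norm_pos_iff.mpr hj) 2⟩
  have hFsum : frobSq A = ∑ i, rowNormSq A i := rfl
  have hFpos : 0 < frobSq A := by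
    rw [hFsum]
    exact Finset.sum_pos (fun i _ => hrow i) univ_nonempty
  -- psi facts
  have hpsi_nonneg : ∀ i, 0 ≤ psi A b x i := fun i => div_nonneg (by positivity) (hrow i).le
  have hpsi_le : ∀ i, psi A b x i ≤ psiMax A b x :=
    fun i => le_ciSup (Set.Finite.bddAbove (Set.finite_range _)) i
  have hΨ_nonneg : 0 ≤ psiMax A b x := (hpsi_nonneg i₀).trans (hpsi_le i₀)
  have hmul : ∀ i, ‖(b - A.mulVec x) i‖ ^ 2 = psi A b x i * rowNormSq A i := by
    intro i
    rw [psi, div_mul_cancel₀ _ (hrow i).ne']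
    rfl
  have hRpos : 0 < vecNormSq (b - A.mulVec x) :=
    Finset.sum_pos' (fun _ _ => by positivity)
      ⟨i₀, mem_univ _, pow_pos (norm_pos_iff.mpr hi₀) 2⟩
  -- Uhat facts
  have hUhat_zero : ∀ i, i ∉ Uhat A b x → (b - A.mulVec x) i = 0 := by
    intro i h
    rw [Uhat, mem_filter] at h
    push_neg at h
    have h0 : psi A b x i = 0 := h (mem_univ i)
    have := hmul i
    rw [h0, zero_mul, pow_eq_zero_iff (two_ne_zero), norm_eq_zero] at this
    exact this
  have hi₀psi : psi A b x i₀ ≠ 0 := by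
    have := hmul i₀
    intro h0
    rw [h0, zero_mul, pow_eq_zero_iff (two_ne_zero), norm_eq_zero] at this
    exact hi₀ this
  have hi₀mem : i₀ ∈ Uhat A b x := mem_filter.mpr ⟨mem_univ _, hi₀psi⟩
  have hUhat_pos : 0 < frobSq (rowSub A (Uhat A b x)) := by
    rw [frobSq_rowSub]
    exact Finset.sum_pos (fun i _ => hrow i) ⟨i₀, hi₀mem⟩
  have hRle : vecNormSq (b - A.mulVec x) ≤ psiMax A b x * frobSq (rowSub A (Uhat A b x)) := by
    rw [frobSq_rowSub, vecNormSq,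
      ← Finset.sum_subset (Finset.subset_univ (Uhat A b x))
        (fun i _ h => by rw [hUhat_zero i h]; simp), Finset.mul_sum]
    refine Finset.sum_le_sum fun i _ => ?_
    rw [hmul i]
    exact mul_le_mul_of_nonneg_right (hpsi_le i) (hrow i).le
  have hRleF : vecNormSq (b - A.mulVec x) ≤ psiMax A b x * frobSq A := by
    rw [vecNormSq, hFsum, Finset.mul_sum]
    refine Finset.sum_le_sum fun i _ => ?_
    rw [hmul i]
    exact mul_le_mul_of_nonneg_right (hpsi_le i) (hrow i).le
  -- greedy set facts
  have hUg : ∀ i ∈ Ugreedy A b x,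
      (1 / 2) * psiMax A b x + (1 / 2) * (vecNormSq (b - A.mulVec x) / frobSq A)
        ≤ psi A b x i := fun i hi => (mem_filter.mp hi).2
  have hthr_pos : 0 < (1 / 2) * psiMax A b x
      + (1 / 2) * (vecNormSq (b - A.mulVec x) / frobSq A) := by
    have := div_pos hRpos hFpos
    linarith
  have hUg_ne0 : ∀ i ∈ Ugreedy A b x, (b - A.mulVec x) i ≠ 0 := by
    intro i hi h0
    have h1 := hUg i hi
    have h2 : psi A b x i = 0 := by
      rw [psi, show b i - A.mulVec x i = 0 from h0]
      simp
    rw [h2] at h1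
    linarith
  obtain ⟨imax, himax⟩ := Finite.exists_max (psi A b x)
  have hΨeq : psiMax A b x = psi A b x imax :=
    le_antisymm (ciSup_le himax) (hpsi_le imax)
  have himax_mem : imax ∈ Ugreedy A b x := by
    refine mem_filter.mpr ⟨mem_univ _, ?_⟩
    have hRF : vecNormSq (b - A.mulVec x) / frobSq A ≤ psiMax A b x :=
      (div_le_iff₀ hFpos).mpr (by linarith [hRleF])
    rw [← hΨeq]
    linarith
  have hFU_pos : 0 < frobSq (rowSub A (Ugreedy A b x)) := by
    rw [frobSq_rowSub]
    exact Finset.sum_pos (fun i _ => hrow i) ⟨imax, himax_mem⟩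
  -- the vector η and its norm
  have hs_eq : vecNormSq (eta A b x) = ∑ i ∈ Ugreedy A b x, ‖(b - A.mulVec x) i‖ ^ 2 := by
    rw [vecNormSq]
    have h : ∀ i, ‖eta A b x i‖ ^ 2
        = if i ∈ Ugreedy A b x then ‖(b - A.mulVec x) i‖ ^ 2 else 0 := by
      intro i
      by_cases h : i ∈ Ugreedy A b x <;> simp [eta, h, Pi.sub_apply]
    simp_rw [h]
    rw [Finset.sum_ite_mem, Finset.univ_inter]
  have hs_pos : 0 < vecNormSq (eta A b x) := by
    rw [hs_eq]
    exact Finset.sum_pos (fun i hi => pow_pos (norm_pos_iff.mpr (hUg_ne0 i hi)) 2)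
      ⟨imax, himax_mem⟩
  have hs_ge : ((1 / 2) * psiMax A b x
        + (1 / 2) * (vecNormSq (b - A.mulVec x) / frobSq A))
        * frobSq (rowSub A (Ugreedy A b x)) ≤ vecNormSq (eta A b x) := by
    rw [hs_eq, frobSq_rowSub, Finset.mul_sum]
    refine Finset.sum_le_sum fun i hi => ?_
    rw [hmul i]
    exact mul_le_mul_of_nonneg_right (hUg i hi) (hrow i).le
  -- the inner product ηᴴ r
  have hdotc : dotc (eta A b x) (b - A.mulVec x) = ((vecNormSq (eta A b x) : ℝ) : ℂ) := by
    have hterm : ∀ i, (starRingEnd ℂ) (eta A b x i) * (b - A.mulVec x) i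
        = if i ∈ Ugreedy A b x then ((‖(b - A.mulVec x) i‖ ^ 2 : ℝ) : ℂ) else 0 := by
      intro i
      by_cases h : i ∈ Ugreedy A b x
      · simp only [eta, h, if_true]
        rw [show b i - A.mulVec x i = (b - A.mulVec x) i from rfl, mul_comm, Complex.mul_conj]
        simp [Complex.normSq_eq_norm_sq, ← Complex.ofReal_pow]
      · simp [eta, h]
    rw [dotc, hs_eq]
    simp_rw [hterm]
    rw [Finset.sum_ite_mem, Finset.univ_inter, Complex.ofReal_sum]
  -- Aᴴη is the conjugate transpose of the row submatrix applied to η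
  have hAη : Aᴴ *ᵥ eta A b x = (rowSub A (Ugreedy A b x))ᴴ *ᵥ eta A b x := by
    funext j
    simp only [Matrix.mulVec, dotProduct, Matrix.conjTranspose_apply]
    refine Finset.sum_congr rfl fun i _ => ?_
    by_cases h : i ∈ Ugreedy A b x
    · simp [rowSub, h]
    · simp [eta, h]
  -- positivity of the denominator
  have hD_pos : 0 < vecNormSq (Aᴴ *ᵥ eta A b x) := by
    rcases (vecNormSq_nonneg (Aᴴ *ᵥ eta A b x)).lt_or_eq with h | h
    · exact h
    · exfalso
      have hzero : Aᴴ *ᵥ eta A b x = 0 := (vecNormSq_eq_zero_iff _).mp h.symm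
      have hbx : b - A.mulVec x = A *ᵥ (xs - x) := by
        rw [Matrix.mulVec_sub, hxs1]
      have h1 : dotc (eta A b x) (b - A.mulVec x) = 0 := by
        rw [hbx, dotc_mulVec, hzero]
        simp [dotc]
      rw [hdotc] at h1
      exact hs_pos.ne' (Complex.ofReal_eq_zero.mp h1)
  have hD_pos' : 0 < vecNormSq ((rowSub A (Ugreedy A b x))ᴴ *ᵥ eta A b x) := by
    rw [← hAη]; exact hD_pos
  -- operator norm bound
  have hkey : dotc ((rowSub A (Ugreedy A b x))ᴴ *ᵥ eta A b x)
      ((rowSub A (Ugreedy A b x))ᴴ *ᵥ eta A b x)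
      = dotc (rowSub A (Ugreedy A b x) *ᵥ ((rowSub A (Ugreedy A b x))ᴴ *ᵥ eta A b x))
          (eta A b x) := by
    rw [dotc_mulVec, Matrix.conjTranspose_conjTranspose]
  have hD2 : vecNormSq ((rowSub A (Ugreedy A b x))ᴴ *ᵥ eta A b x) ^ 2
      ≤ (sigma1Sq (rowSub A (Ugreedy A b x))
          * vecNormSq ((rowSub A (Ugreedy A b x))ᴴ *ᵥ eta A b x)) * vecNormSq (eta A b x) := by
    calc vecNormSq ((rowSub A (Ugreedy A b x))ᴴ *ᵥ eta A b x) ^ 2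
        = ((dotc (rowSub A (Ugreedy A b x) *ᵥ ((rowSub A (Ugreedy A b x))ᴴ *ᵥ eta A b x))
            (eta A b x)).re) ^ 2 := by rw [← re_dotc_self, hkey]
      _ ≤ vecNormSq (rowSub A (Ugreedy A b x) *ᵥ ((rowSub A (Ugreedy A b x))ᴴ *ᵥ eta A b x))
            * vecNormSq (eta A b x) := dotc_re_sq_le _ _
      _ ≤ (sigma1Sq (rowSub A (Ugreedy A b x))
            * vecNormSq ((rowSub A (Ugreedy A b x))ᴴ *ᵥ eta A b x)) * vecNormSq (eta A b x) :=
          mul_le_mul_of_nonneg_right (sigma1_bound _ _) (vecNormSq_nonneg _)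
  have hDle : vecNormSq ((rowSub A (Ugreedy A b x))ᴴ *ᵥ eta A b x)
      ≤ sigma1Sq (rowSub A (Ugreedy A b x)) * vecNormSq (eta A b x) := by
    nlinarith [hD2, hD_pos']
  have hσ1_pos : 0 < sigma1Sq (rowSub A (Ugreedy A b x)) := by
    nlinarith [hDle, hD_pos', hs_pos]
  have hDAle : vecNormSq (Aᴴ *ᵥ eta A b x)
      ≤ sigma1Sq (rowSub A (Ugreedy A b x)) * vecNormSq (eta A b x) := by
    rw [hAη]; exact hDle
  -- smallest singular value bound
  have hRX : sigmaRSq A * vecNormSq (x - xs) ≤ vecNormSq (b - A.mulVec x) := by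
    have h1 := sigmaR_bound A (x - xs) hx
    have h2 : vecNormSq (A *ᵥ (x - xs)) = vecNormSq (b - A.mulVec x) := by
      rw [Matrix.mulVec_sub, hxs1]
      simp [vecNormSq, norm_sub_rev]
    rw [← h2]
    exact h1
  -- rewrite phi
  have hphi : phi A b x (eta A b x)
      = vecNormSq (eta A b x) ^ 2 / vecNormSq (Aᴴ.mulVec (eta A b x)) := by
    rw [phi, hdotc]
    congr 1
    rw [Complex.norm_real, Real.norm_eq_abs, sq_abs]
  rw [hphi, le_div_iff₀ hD_pos]
  -- final algebraic assembly
  have ha_nonneg : 0 ≤ (1 / 2) * (frobSq A / frobSq (rowSub A (Uhat A b x))) + 1 / 2 := by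
    have := div_nonneg hFpos.le hUhat_pos.le
    linarith
  have hcoef_nonneg :
      0 ≤ ((1 / 2) * (frobSq A / frobSq (rowSub A (Uhat A b x))) + 1 / 2)
        * (frobSq (rowSub A (Ugreedy A b x)) / frobSq A) :=
    mul_nonneg ha_nonneg (div_nonneg hFU_pos.le hFpos.le)
  have hcoef2_nonneg :
      0 ≤ ((1 / 2) * (frobSq A / frobSq (rowSub A (Uhat A b x))) + 1 / 2)
        * (frobSq (rowSub A (Ugreedy A b x)) / frobSq A)
        * (sigmaRSq A / sigma1Sq (rowSub A (Ugreedy A b x))) * vecNormSq (x - xs) :=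
    mul_nonneg (mul_nonneg hcoef_nonneg
      (div_nonneg (sigmaR_nonneg A) hσ1_pos.le)) (vecNormSq_nonneg _)
  have hstep1 : ((1 / 2) * (frobSq A / frobSq (rowSub A (Uhat A b x))) + 1 / 2)
      * (frobSq (rowSub A (Ugreedy A b x)) / frobSq A) * vecNormSq (b - A.mulVec x)
      ≤ vecNormSq (eta A b x) := by
    have hRFH : vecNormSq (b - A.mulVec x) / frobSq (rowSub A (Uhat A b x)) ≤ psiMax A b x :=
      (div_le_iff₀ hUhat_pos).mpr hRle
    have e1 : ((1 / 2) * (frobSq A / frobSq (rowSub A (Uhat A b x))) + 1 / 2)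
        * (frobSq (rowSub A (Ugreedy A b x)) / frobSq A) * vecNormSq (b - A.mulVec x)
        = ((1 / 2) * (vecNormSq (b - A.mulVec x) / frobSq (rowSub A (Uhat A b x)))
          + (1 / 2) * (vecNormSq (b - A.mulVec x) / frobSq A))
            * frobSq (rowSub A (Ugreedy A b x)) := by
      field_simp
    rw [e1]
    refine le_trans (mul_le_mul_of_nonneg_right ?_ hFU_pos.le) hs_ge
    linarith [hRFH]
  calc ((1 / 2) * (frobSq A / frobSq (rowSub A (Uhat A b x))) + 1 / 2)
        * (frobSq (rowSub A (Ugreedy A b x)) / frobSq A)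
        * (sigmaRSq A / sigma1Sq (rowSub A (Ugreedy A b x))) * vecNormSq (x - xs)
        * vecNormSq (Aᴴ.mulVec (eta A b x))
      ≤ ((1 / 2) * (frobSq A / frobSq (rowSub A (Uhat A b x))) + 1 / 2)
        * (frobSq (rowSub A (Ugreedy A b x)) / frobSq A)
        * (sigmaRSq A / sigma1Sq (rowSub A (Ugreedy A b x))) * vecNormSq (x - xs)
        * (sigma1Sq (rowSub A (Ugreedy A b x)) * vecNormSq (eta A b x)) :=
      mul_le_mul_of_nonneg_left hDAle hcoef2_nonneg
    _ = ((1 / 2) * (frobSq A / frobSq (rowSub A (Uhat A b x))) + 1 / 2)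
        * (frobSq (rowSub A (Ugreedy A b x)) / frobSq A)
        * (sigmaRSq A * vecNormSq (x - xs)) * vecNormSq (eta A b x) := by
      field_simp
    _ ≤ ((1 / 2) * (frobSq A / frobSq (rowSub A (Uhat A b x))) + 1 / 2)
        * (frobSq (rowSub A (Ugreedy A b x)) / frobSq A)
        * vecNormSq (b - A.mulVec x) * vecNormSq (eta A b x) :=
      mul_le_mul_of_nonneg_right
        (mul_le_mul_of_nonneg_left hRX hcoef_nonneg) hs_pos.le
    _ ≤ vecNormSq (eta A b x) * vecNormSq (eta A b x) :=
      mul_le_mul_of_nonneg_right hstep1 hs_pos.le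
    _ = vecNormSq (eta A b x) ^ 2 := (sq _).symm
end
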